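/- Superposition of strategies in an MDP: given two strategies σ₁, σ₂ in an MDP M and α ∈ [0,1], there exists a strategy σ whose outcome sequence of distributions satisfies M^σ_i = α · M^{σ₁}_i + (1−α) · M^{σ₂}_i for every round i; explicitly, σ(ρ)(a) = (α·Pr^{σ₁}(Cyl(ρ))·σ₁(ρ)(a) + (1−α)·Pr^{σ₂}(Cyl(ρ))·σ₂(ρ)(a)) / (α·Pr^{σ₁}(Cyl(ρ)) + (1−α)·Pr^{σ₂}(Cyl(ρ))) whenever the denominator is positive. -/

import Mathlib

open Finset

/-- A Markov decision process: transition kernel `δ q a q'`. -/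
structure MDP (Q A : Type) where
  δ : Q → A → Q → ℝ

/-- Validity of the transition kernel. -/
def IsMDP {Q A : Type} [Fintype Q] (M : MDP Q A) : Prop :=
  (∀ q a q', 0 ≤ M.δ q a q') ∧ (∀ q a, (∑ q' : Q, M.δ q a q') = 1)

/-- A probability distribution over a finite set. -/
def IsDist {Q : Type} [Fintype Q] (d : Q → ℝ) : Prop :=
  (∀ q, 0 ≤ d q) ∧ (∑ q : Q, d q) = 1

/-- Randomized strategies: map (reversed) state histories to distributions on actions. -/
abbrev StratM (Q A : Type) := List Q → A → ℝ

def IsStratM {Q A : Type} [Fintype A] (σ : StratM Q A) : Prop :=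
  ∀ h, (∀ a, 0 ≤ σ h a) ∧ (∑ a : A, σ h a) = 1

/-- Probability `Pr^σ(Cyl(ρ))` of a finite state history `ρ` (in reverse chronological
order: the head is the current state), with the actions marginalized out. -/
def hprobM {Q A : Type} [Fintype A] (M : MDP Q A) (d0 : Q → ℝ)
    (σ : StratM Q A) : List Q → ℝ
  | [] => 1
  | [q] => d0 q
  | q :: q' :: h =>
      (∑ a : A, σ (q' :: h) a * M.δ q' a q) * hprobM M d0 σ (q' :: h)

/-- The outcome sequence of distributions `M^σ_i`. -/
def outSeqM {Q A : Type} [Fintype Q] [Fintype A] (M : MDP Q A) (d0 : Q → ℝ)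
    (σ : StratM Q A) (i : ℕ) (q : Q) : ℝ :=
  ∑ h : Fin i → Q, hprobM M d0 σ (q :: (List.ofFn h).reverse)

/-- superposition of strategies in an MDP. For strategies `σ₁, σ₂` and
`α ∈ [0,1]` there is a strategy `σ` whose outcome sequence is the pointwise
superposition `α·M^{σ₁} + (1-α)·M^{σ₂}`, and which is given explicitly by the stated
formula whenever the denominator is positive. -/
theorem superposition_of_strategies {Q A : Type} [Fintype Q] [Fintype A]
    (M : MDP Q A) (hM : IsMDP M) (d0 : Q → ℝ) (hd0 : IsDist d0)
    (σ₁ σ₂ : StratM Q A) (h₁ : IsStratM σ₁) (h₂ : IsStratM σ₂)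
    (α : ℝ) (hα0 : 0 ≤ α) (hα1 : α ≤ 1) :
    ∃ σ : StratM Q A, IsStratM σ ∧
      (∀ i q, outSeqM M d0 σ i q =
        α * outSeqM M d0 σ₁ i q + (1 - α) * outSeqM M d0 σ₂ i q) ∧
      (∀ (ρ : List Q) (a : A),
        0 < α * hprobM M d0 σ₁ ρ + (1 - α) * hprobM M d0 σ₂ ρ →
        σ ρ a =
          (α * hprobM M d0 σ₁ ρ * σ₁ ρ a + (1 - α) * hprobM M d0 σ₂ ρ * σ₂ ρ a) /
            (α * hprobM M d0 σ₁ ρ + (1 - α) * hprobM M d0 σ₂ ρ)) := by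
  classical
  have h1α : 0 ≤ 1 - α := by linarith
  -- nonnegativity of hprobM
  have hnn : ∀ (σ : StratM Q A), IsStratM σ → ∀ ρ, 0 ≤ hprobM M d0 σ ρ := by
    intro σ hσ ρ
    induction ρ with
    | nil => simp [hprobM]
    | cons q t ih =>
      cases t with
      | nil => simpa [hprobM] using hd0.1 q
      | cons q' h =>
        have hS : 0 ≤ ∑ a : A, σ (q' :: h) a * M.δ q' a q :=
          Finset.sum_nonneg fun a _ => mul_nonneg ((hσ (q' :: h)).1 a) (hM.1 q' a q)
        exact mul_nonneg hS ih
  set D : List Q → ℝ := fun ρ =>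
    α * hprobM M d0 σ₁ ρ + (1 - α) * hprobM M d0 σ₂ ρ with hDdef
  have hD_nonneg : ∀ ρ, 0 ≤ D ρ := fun ρ =>
    add_nonneg (mul_nonneg hα0 (hnn σ₁ h₁ ρ)) (mul_nonneg h1α (hnn σ₂ h₂ ρ))
  set σ : StratM Q A := fun ρ a =>
    if 0 < D ρ then
      (α * hprobM M d0 σ₁ ρ * σ₁ ρ a + (1 - α) * hprobM M d0 σ₂ ρ * σ₂ ρ a) / D ρ
    else σ₁ ρ a with hσdef
  have hσstrat : IsStratM σ := by
    intro ρ
    constructor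
    · intro a
      simp only [hσdef]
      split_ifs with hpos
      · exact div_nonneg (add_nonneg
          (mul_nonneg (mul_nonneg hα0 (hnn σ₁ h₁ ρ)) ((h₁ ρ).1 a))
          (mul_nonneg (mul_nonneg h1α (hnn σ₂ h₂ ρ)) ((h₂ ρ).1 a))) (le_of_lt hpos)
      · exact (h₁ ρ).1 a
    · simp only [hσdef]
      split_ifs with hpos
      · rw [← Finset.sum_div, Finset.sum_add_distrib, ← Finset.mul_sum, ← Finset.mul_sum,
          (h₁ ρ).2, (h₂ ρ).2, mul_one, mul_one]
        exact div_self (ne_of_gt hpos)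
      · exact (h₁ ρ).2
  -- key: hprobM of σ equals D
  have hkey : ∀ ρ, hprobM M d0 σ ρ = D ρ := by
    intro ρ
    induction ρ with
    | nil => simp [hprobM, hDdef]
    | cons q t ih =>
      cases t with
      | nil => simp [hprobM, hDdef]; ring
      | cons q' h =>
        have lhs : hprobM M d0 σ (q :: q' :: h) =
            (∑ a : A, σ (q' :: h) a * M.δ q' a q) * hprobM M d0 σ (q' :: h) := rfl
        rw [lhs, ih]
        by_cases hpos : 0 < D (q' :: h)
        · have hσρ : ∀ a, σ (q' :: h) a =
              (α * hprobM M d0 σ₁ (q' :: h) * σ₁ (q' :: h) a +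
               (1 - α) * hprobM M d0 σ₂ (q' :: h) * σ₂ (q' :: h) a) / D (q' :: h) := by
            intro a; simp only [hσdef, if_pos hpos]
          have : (∑ a : A, σ (q' :: h) a * M.δ q' a q) * D (q' :: h) =
              α * hprobM M d0 σ₁ (q' :: h) * (∑ a : A, σ₁ (q' :: h) a * M.δ q' a q) +
              (1 - α) * hprobM M d0 σ₂ (q' :: h) * (∑ a : A, σ₂ (q' :: h) a * M.δ q' a q) := by
            have hDne : D (q' :: h) ≠ 0 := ne_of_gt hpos
            rw [Finset.sum_congr rfl (fun a _ => by rw [hσρ a])]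
            rw [show (∑ a : A,
                (α * hprobM M d0 σ₁ (q' :: h) * σ₁ (q' :: h) a +
                 (1 - α) * hprobM M d0 σ₂ (q' :: h) * σ₂ (q' :: h) a) / D (q' :: h) *
                  M.δ q' a q) =
                (∑ a : A,
                (α * hprobM M d0 σ₁ (q' :: h) * σ₁ (q' :: h) a +
                 (1 - α) * hprobM M d0 σ₂ (q' :: h) * σ₂ (q' :: h) a) * M.δ q' a q) /
                  D (q' :: h) from by
              rw [Finset.sum_div]
              exact Finset.sum_congr rfl fun a _ => div_mul_eq_mul_div _ _ _]
            rw [div_mul_cancel₀ _ hDne, Finset.mul_sum, Finset.mul_sum,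
              ← Finset.sum_add_distrib]
            exact Finset.sum_congr rfl (fun a _ => by ring)
          rw [this]
          show _ = α * hprobM M d0 σ₁ (q :: q' :: h) + (1 - α) * hprobM M d0 σ₂ (q :: q' :: h)
          simp only [hprobM]
          ring
        · have hzero : D (q' :: h) = 0 := le_antisymm (not_lt.1 hpos) (hD_nonneg _)
          have h1 : α * hprobM M d0 σ₁ (q' :: h) = 0 := by
            have := hD_nonneg (q' :: h)
            have n1 := mul_nonneg hα0 (hnn σ₁ h₁ (q' :: h))
            have n2 := mul_nonneg h1α (hnn σ₂ h₂ (q' :: h))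
            simp only [hDdef] at hzero
            linarith
          have h2 : (1 - α) * hprobM M d0 σ₂ (q' :: h) = 0 := by
            have n1 := mul_nonneg hα0 (hnn σ₁ h₁ (q' :: h))
            simp only [hDdef] at hzero
            linarith
          rw [hzero, mul_zero]
          show (0:ℝ) = α * hprobM M d0 σ₁ (q :: q' :: h) + (1 - α) * hprobM M d0 σ₂ (q :: q' :: h)
          simp only [hprobM]
          have e1 : α * ((∑ a : A, σ₁ (q' :: h) a * M.δ q' a q) * hprobM M d0 σ₁ (q' :: h)) =
              (∑ a : A, σ₁ (q' :: h) a * M.δ q' a q) * (α * hprobM M d0 σ₁ (q' :: h)) := by ring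
          have e2 : (1 - α) * ((∑ a : A, σ₂ (q' :: h) a * M.δ q' a q) * hprobM M d0 σ₂ (q' :: h)) =
              (∑ a : A, σ₂ (q' :: h) a * M.δ q' a q) * ((1 - α) * hprobM M d0 σ₂ (q' :: h)) := by ring
          rw [e1, e2, h1, h2, mul_zero, mul_zero, add_zero]
  refine ⟨σ, hσstrat, ?_, ?_⟩
  · intro i q
    simp only [outSeqM]
    rw [Finset.mul_sum, Finset.mul_sum, ← Finset.sum_add_distrib]
    exact Finset.sum_congr rfl fun h _ => hkey _
  · intro ρ a hpos
    simp only [hσdef, if_pos (show 0 < D ρ from hpos)]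
    rfl
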